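/- Let V be a real inner product space of dimension 4n carrying a quaternionic Hermitian structure (J₁,J₂,J₃), and let T be a 3-form on V of type (1,2)+(2,1) with respect to each J_α, α = 1,2,3. Then for every orthonormal basis (e_1,…,e_{4n}) of V and every cyclic permutation (α,β,γ) of (1,2,3) one has Σ_{i,j,k=1}^{4n} T(e_i,e_j,e_k) · T(J_γ e_i, J_β e_j, e_k) = 0 (equivalently, Σ_{i,j} g(T(e_i,e_j), T(J_γ e_i, J_β e_j)) = 0, where T(X,Y) denotes the vector with g(T(X,Y),Z) = T(X,Y,Z)). -/

import Mathlib

open scoped RealInnerProductSpace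

set_option linter.unusedSectionVars false

section QktAux
variable {V : Type*} [NormedAddCommGroup V] [InnerProductSpace ℝ V] [FiniteDimensional ℝ V]
variable {m : ℕ}

private lemma qkt_sum3_swap13 {M : Type*} [AddCommMonoid M] (f : Fin m → Fin m → Fin m → M) :
    ∑ i, ∑ j, ∑ k, f i j k = ∑ i, ∑ j, ∑ k, f k j i :=
  calc ∑ i, ∑ j, ∑ k, f i j k
      = ∑ j, ∑ i, ∑ k, f i j k := Finset.sum_comm
    _ = ∑ j, ∑ k, ∑ i, f i j k := Finset.sum_congr rfl fun _ _ => Finset.sum_comm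
    _ = ∑ k, ∑ j, ∑ i, f i j k := Finset.sum_comm

private lemma qkt_sum3_swap12 {M : Type*} [AddCommMonoid M] (f : Fin m → Fin m → Fin m → M) :
    ∑ i, ∑ j, ∑ k, f i j k = ∑ i, ∑ j, ∑ k, f j i k := Finset.sum_comm

private lemma qkt_sum3_swap23 {M : Type*} [AddCommMonoid M] (f : Fin m → Fin m → Fin m → M) :
    ∑ i, ∑ j, ∑ k, f i j k = ∑ i, ∑ j, ∑ k, f i k j :=
  Finset.sum_congr rfl fun _ _ => Finset.sum_comm

private lemma qkt_rot (e : OrthonormalBasis (Fin m) ℝ V) (J : V →ₗ[ℝ] V)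
    (horth : ∀ x y : V, ⟪J x, J y⟫ = ⟪x, y⟫) (hsq : ∀ x : V, J (J x) = -x)
    (u v : V →ₗ[ℝ] ℝ) :
    ∑ i, u (J (e i)) * v (J (e i)) = ∑ i, u (e i) * v (e i) := by
  have skew : ∀ a y : V, ⟪a, J y⟫ = -⟪J a, y⟫ := by
    intro a y
    have h1 := horth (J a) y
    rw [hsq, inner_neg_left] at h1
    linarith
  set a := (InnerProductSpace.toDual ℝ V).symm (LinearMap.toContinuousLinearMap u) with ha
  set b := (InnerProductSpace.toDual ℝ V).symm (LinearMap.toContinuousLinearMap v) with hb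
  have hu : ∀ x : V, u x = ⟪a, x⟫ := by
    intro x; rw [ha, InnerProductSpace.toDual_symm_apply]; simp
  have hv : ∀ x : V, v x = ⟪b, x⟫ := by
    intro x; rw [hb, InnerProductSpace.toDual_symm_apply]; simp
  calc ∑ i, u (J (e i)) * v (J (e i))
      = ∑ i, ⟪J a, e i⟫ * ⟪J b, e i⟫ := by
        refine Finset.sum_congr rfl fun i _ => ?_
        rw [hu, hv, skew, skew]; ring
    _ = ∑ i, ⟪J a, e i⟫ * ⟪e i, J b⟫ := by
        exact Finset.sum_congr rfl fun i _ => by rw [real_inner_comm (J b) (e i)]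
    _ = ⟪J a, J b⟫ := e.sum_inner_mul_inner _ _
    _ = ⟪a, b⟫ := horth a b
    _ = ∑ i, ⟪a, e i⟫ * ⟪e i, b⟫ := (e.sum_inner_mul_inner _ _).symm
    _ = ∑ i, u (e i) * v (e i) := by
        exact Finset.sum_congr rfl fun i _ => by rw [hu, hv, real_inner_comm b (e i)]

private lemma qkt_shift (e : OrthonormalBasis (Fin m) ℝ V) (J : V →ₗ[ℝ] V)
    (horth : ∀ x y : V, ⟪J x, J y⟫ = ⟪x, y⟫) (hsq : ∀ x : V, J (J x) = -x)
    (u v : V →ₗ[ℝ] ℝ) :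
    ∑ i, u (J (e i)) * v (e i) = -∑ i, u (e i) * v (J (e i)) := by
  have h := qkt_rot e J horth hsq u (v ∘ₗ J)
  simp only [LinearMap.comp_apply] at h
  calc ∑ i, u (J (e i)) * v (e i)
      = -∑ i, u (J (e i)) * v (J (J (e i))) := by
        rw [← Finset.sum_neg_distrib]
        refine Finset.sum_congr rfl fun i _ => ?_
        rw [hsq, map_neg]; ring
    _ = -∑ i, u (e i) * v (J (e i)) := by rw [h]

private noncomputable def GG (e : OrthonormalBasis (Fin m) ℝ V)
    (T : V →ₗ[ℝ] V →ₗ[ℝ] V →ₗ[ℝ] ℝ) (A B C P Q R : V →ₗ[ℝ] V) : ℝ :=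
  ∑ i, ∑ j, ∑ k, T (A (e i)) (B (e j)) (C (e k)) * T (P (e i)) (Q (e j)) (R (e k))

private lemma qkt_shift1 (e : OrthonormalBasis (Fin m) ℝ V)
    (T : V →ₗ[ℝ] V →ₗ[ℝ] V →ₗ[ℝ] ℝ) (J : V →ₗ[ℝ] V)
    (horth : ∀ x y : V, ⟪J x, J y⟫ = ⟪x, y⟫) (hsq : ∀ x : V, J (J x) = -x)
    (B C P Q R : V →ₗ[ℝ] V) :
    GG e T J B C P Q R = -GG e T LinearMap.id B C (P ∘ₗ J) Q R := by
  simp only [GG, LinearMap.id_apply, LinearMap.comp_apply]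
  calc ∑ i, ∑ j, ∑ k, T (J (e i)) (B (e j)) (C (e k)) * T (P (e i)) (Q (e j)) (R (e k))
      = ∑ i, ∑ j, ∑ k, T (J (e k)) (B (e j)) (C (e i)) * T (P (e k)) (Q (e j)) (R (e i)) :=
        qkt_sum3_swap13 _
    _ = ∑ i, ∑ j, ∑ k,
          -(T (e k) (B (e j)) (C (e i)) * T (P (J (e k))) (Q (e j)) (R (e i))) := by
        refine Finset.sum_congr rfl fun i _ => Finset.sum_congr rfl fun j _ => ?_
        have hs := qkt_shift e J horth hsq ((T.flip (B (e j))).flip (C (e i)))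
          (((T.flip (Q (e j))).flip (R (e i))) ∘ₗ P)
        simp only [LinearMap.flip_apply, LinearMap.comp_apply] at hs
        rw [hs]
        exact (Finset.sum_neg_distrib _).symm
    _ = ∑ i, ∑ j, ∑ k,
          -(T (e i) (B (e j)) (C (e k)) * T (P (J (e i))) (Q (e j)) (R (e k))) :=
        (qkt_sum3_swap13 _).symm
    _ = -∑ i, ∑ j, ∑ k,
          T (e i) (B (e j)) (C (e k)) * T (P (J (e i))) (Q (e j)) (R (e k)) := by
        simp only [Finset.sum_neg_distrib]

private lemma qkt_shift2 (e : OrthonormalBasis (Fin m) ℝ V)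
    (T : V →ₗ[ℝ] V →ₗ[ℝ] V →ₗ[ℝ] ℝ) (J : V →ₗ[ℝ] V)
    (horth : ∀ x y : V, ⟪J x, J y⟫ = ⟪x, y⟫) (hsq : ∀ x : V, J (J x) = -x)
    (C P Q R : V →ₗ[ℝ] V) :
    GG e T LinearMap.id J C P Q R = -GG e T LinearMap.id LinearMap.id C P (Q ∘ₗ J) R := by
  simp only [GG, LinearMap.id_apply, LinearMap.comp_apply]
  calc ∑ i, ∑ j, ∑ k, T (e i) (J (e j)) (C (e k)) * T (P (e i)) (Q (e j)) (R (e k))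
      = ∑ i, ∑ j, ∑ k, T (e i) (J (e k)) (C (e j)) * T (P (e i)) (Q (e k)) (R (e j)) :=
        qkt_sum3_swap23 _
    _ = ∑ i, ∑ j, ∑ k,
          -(T (e i) (e k) (C (e j)) * T (P (e i)) (Q (J (e k))) (R (e j))) := by
        refine Finset.sum_congr rfl fun i _ => Finset.sum_congr rfl fun j _ => ?_
        have hs := qkt_shift e J horth hsq ((T (e i)).flip (C (e j)))
          (((T (P (e i))).flip (R (e j))) ∘ₗ Q)
        simp only [LinearMap.flip_apply, LinearMap.comp_apply] at hs
        rw [hs]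
        exact (Finset.sum_neg_distrib _).symm
    _ = ∑ i, ∑ j, ∑ k,
          -(T (e i) (e j) (C (e k)) * T (P (e i)) (Q (J (e j))) (R (e k))) :=
        (qkt_sum3_swap23 _).symm
    _ = -∑ i, ∑ j, ∑ k,
          T (e i) (e j) (C (e k)) * T (P (e i)) (Q (J (e j))) (R (e k)) := by
        simp only [Finset.sum_neg_distrib]

private lemma qkt_shift3 (e : OrthonormalBasis (Fin m) ℝ V)
    (T : V →ₗ[ℝ] V →ₗ[ℝ] V →ₗ[ℝ] ℝ) (J : V →ₗ[ℝ] V)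
    (horth : ∀ x y : V, ⟪J x, J y⟫ = ⟪x, y⟫) (hsq : ∀ x : V, J (J x) = -x)
    (P Q R : V →ₗ[ℝ] V) :
    GG e T LinearMap.id LinearMap.id J P Q R
      = -GG e T LinearMap.id LinearMap.id LinearMap.id P Q (R ∘ₗ J) := by
  simp only [GG, LinearMap.id_apply, LinearMap.comp_apply]
  calc ∑ i, ∑ j, ∑ k, T (e i) (e j) (J (e k)) * T (P (e i)) (Q (e j)) (R (e k))
      = ∑ i, ∑ j, ∑ k,
          -(T (e i) (e j) (e k) * T (P (e i)) (Q (e j)) (R (J (e k)))) := by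
        refine Finset.sum_congr rfl fun i _ => Finset.sum_congr rfl fun j _ => ?_
        have hs := qkt_shift e J horth hsq (T (e i) (e j))
          ((T (P (e i)) (Q (e j))) ∘ₗ R)
        simp only [LinearMap.comp_apply] at hs
        rw [hs]
        exact (Finset.sum_neg_distrib _).symm
    _ = -∑ i, ∑ j, ∑ k,
          T (e i) (e j) (e k) * T (P (e i)) (Q (e j)) (R (J (e k))) := by
        simp only [Finset.sum_neg_distrib]

private lemma qkt_perm12 (e : OrthonormalBasis (Fin m) ℝ V)
    (T : V →ₗ[ℝ] V →ₗ[ℝ] V →ₗ[ℝ] ℝ)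
    (halt1 : ∀ x y z : V, T x y z = -T y x z) (P Q R : V →ₗ[ℝ] V) :
    GG e T LinearMap.id LinearMap.id LinearMap.id P Q R
      = GG e T LinearMap.id LinearMap.id LinearMap.id Q P R := by
  simp only [GG, LinearMap.id_apply]
  calc ∑ i, ∑ j, ∑ k, T (e i) (e j) (e k) * T (P (e i)) (Q (e j)) (R (e k))
      = ∑ i, ∑ j, ∑ k, T (e j) (e i) (e k) * T (Q (e j)) (P (e i)) (R (e k)) := by
        refine Finset.sum_congr rfl fun i _ => Finset.sum_congr rfl fun j _ =>
          Finset.sum_congr rfl fun k _ => ?_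
        rw [halt1 (e i) (e j) (e k), halt1 (P (e i)) (Q (e j)) (R (e k))]; ring
    _ = ∑ i, ∑ j, ∑ k, T (e i) (e j) (e k) * T (Q (e i)) (P (e j)) (R (e k)) :=
        (qkt_sum3_swap12 _).symm

private lemma qkt_perm13 (e : OrthonormalBasis (Fin m) ℝ V)
    (T : V →ₗ[ℝ] V →ₗ[ℝ] V →ₗ[ℝ] ℝ)
    (halt1 : ∀ x y z : V, T x y z = -T y x z)
    (halt2 : ∀ x y z : V, T x y z = -T x z y) (P Q R : V →ₗ[ℝ] V) :
    GG e T LinearMap.id LinearMap.id LinearMap.id P Q R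
      = GG e T LinearMap.id LinearMap.id LinearMap.id R Q P := by
  have h13 : ∀ x y z : V, T x y z = -T z y x := by
    intro x y z
    rw [halt1 x y z, halt2 y x z, halt1 y z x]; ring
  simp only [GG, LinearMap.id_apply]
  calc ∑ i, ∑ j, ∑ k, T (e i) (e j) (e k) * T (P (e i)) (Q (e j)) (R (e k))
      = ∑ i, ∑ j, ∑ k, T (e k) (e j) (e i) * T (R (e k)) (Q (e j)) (P (e i)) := by
        refine Finset.sum_congr rfl fun i _ => Finset.sum_congr rfl fun j _ =>
          Finset.sum_congr rfl fun k _ => ?_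
        rw [h13 (e i) (e j) (e k), h13 (P (e i)) (Q (e j)) (R (e k))]; ring
    _ = ∑ i, ∑ j, ∑ k, T (e i) (e j) (e k) * T (R (e i)) (Q (e j)) (P (e k)) :=
        (qkt_sum3_swap13 _).symm

private lemma qkt_type_first (e : OrthonormalBasis (Fin m) ℝ V)
    (T : V →ₗ[ℝ] V →ₗ[ℝ] V →ₗ[ℝ] ℝ) (Jb : V →ₗ[ℝ] V)
    (htypeb : ∀ x y z : V,
      T x y z = T (Jb x) (Jb y) z + T (Jb x) y (Jb z) + T x (Jb y) (Jb z))
    (P Q R : V →ₗ[ℝ] V) :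
    GG e T LinearMap.id LinearMap.id LinearMap.id P Q R
      = GG e T Jb Jb LinearMap.id P Q R + GG e T Jb LinearMap.id Jb P Q R
        + GG e T LinearMap.id Jb Jb P Q R := by
  simp only [GG, LinearMap.id_apply]
  have h1 : (∑ i, ∑ j, ∑ k, T (e i) (e j) (e k) * T (P (e i)) (Q (e j)) (R (e k)))
      = ∑ i, ∑ j, ∑ k,
          (T (Jb (e i)) (Jb (e j)) (e k) * T (P (e i)) (Q (e j)) (R (e k))
            + T (Jb (e i)) (e j) (Jb (e k)) * T (P (e i)) (Q (e j)) (R (e k))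
            + T (e i) (Jb (e j)) (Jb (e k)) * T (P (e i)) (Q (e j)) (R (e k))) := by
    refine Finset.sum_congr rfl fun i _ => Finset.sum_congr rfl fun j _ =>
      Finset.sum_congr rfl fun k _ => ?_
    rw [htypeb (e i) (e j) (e k)]; ring
  rw [h1]
  simp only [Finset.sum_add_distrib]

private lemma qkt_type_second (e : OrthonormalBasis (Fin m) ℝ V)
    (T : V →ₗ[ℝ] V →ₗ[ℝ] V →ₗ[ℝ] ℝ) (Ja Jb Jc : V →ₗ[ℝ] V)
    (hba : ∀ x : V, Jb (Ja x) = -(Jc x))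
    (htypeb : ∀ x y z : V,
      T x y z = T (Jb x) (Jb y) z + T (Jb x) y (Jb z) + T x (Jb y) (Jb z)) :
    GG e T LinearMap.id LinearMap.id LinearMap.id LinearMap.id LinearMap.id Ja
      = GG e T LinearMap.id LinearMap.id LinearMap.id Jb Jb Ja
        - GG e T LinearMap.id LinearMap.id LinearMap.id Jb LinearMap.id Jc
        - GG e T LinearMap.id LinearMap.id LinearMap.id LinearMap.id Jb Jc := by
  simp only [GG, LinearMap.id_apply]
  have h1 : (∑ i, ∑ j, ∑ k, T (e i) (e j) (e k) * T (e i) (e j) (Ja (e k)))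
      = ∑ i, ∑ j, ∑ k,
          (T (e i) (e j) (e k) * T (Jb (e i)) (Jb (e j)) (Ja (e k))
            - T (e i) (e j) (e k) * T (Jb (e i)) (e j) (Jc (e k))
            - T (e i) (e j) (e k) * T (e i) (Jb (e j)) (Jc (e k))) := by
    refine Finset.sum_congr rfl fun i _ => Finset.sum_congr rfl fun j _ =>
      Finset.sum_congr rfl fun k _ => ?_
    rw [htypeb (e i) (e j) (Ja (e k)), hba, map_neg, map_neg]; ring
  rw [h1]
  simp only [Finset.sum_sub_distrib]

private lemma qkt_key (e : OrthonormalBasis (Fin m) ℝ V)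
    (Ja Jb Jc : V →ₗ[ℝ] V)
    (horthb : ∀ x y : V, ⟪Jb x, Jb y⟫ = ⟪x, y⟫)
    (hsqb : ∀ x : V, Jb (Jb x) = -x)
    (hba : ∀ x : V, Jb (Ja x) = -(Jc x))
    (hab : ∀ x : V, Ja (Jb x) = Jc x)
    (T : V →ₗ[ℝ] V →ₗ[ℝ] V →ₗ[ℝ] ℝ)
    (halt1 : ∀ x y z : V, T x y z = -T y x z)
    (halt2 : ∀ x y z : V, T x y z = -T x z y)
    (htypeb : ∀ x y z : V,
      T x y z = T (Jb x) (Jb y) z + T (Jb x) y (Jb z) + T x (Jb y) (Jb z)) :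
    ∑ i, ∑ j, ∑ k, T (e i) (e j) (e k) * T (Jc (e i)) (Jb (e j)) (e k) = 0 := by
  have habL : Ja ∘ₗ Jb = Jc := LinearMap.ext hab
  set I := (LinearMap.id : V →ₗ[ℝ] V) with hI
  -- claim 1: type condition on the first factor, then shift everything to the second
  have t1 : GG e T Jb Jb I I I Ja = GG e T I I I Jb Jb Ja := by
    rw [qkt_shift1 e T Jb horthb hsqb, LinearMap.id_comp,
      qkt_shift2 e T Jb horthb hsqb, LinearMap.id_comp, neg_neg]
  have t2 : GG e T Jb I Jb I I Ja = GG e T I I I Jb I Jc := by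
    rw [qkt_shift1 e T Jb horthb hsqb, LinearMap.id_comp,
      qkt_shift3 e T Jb horthb hsqb, habL, neg_neg]
  have t3 : GG e T I Jb Jb I I Ja = GG e T I I I I Jb Jc := by
    rw [qkt_shift2 e T Jb horthb hsqb, LinearMap.id_comp,
      qkt_shift3 e T Jb horthb hsqb, habL, neg_neg]
  have c1 : GG e T I I I I I Ja
      = GG e T I I I Jb Jb Ja + GG e T I I I Jb I Jc + GG e T I I I I Jb Jc := by
    rw [qkt_type_first e T Jb htypeb I I Ja, t1, t2, t3]
  have c2 : GG e T I I I I I Ja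
      = GG e T I I I Jb Jb Ja - GG e T I I I Jb I Jc - GG e T I I I I Jb Jc :=
    qkt_type_second e T Ja Jb Jc hba htypeb
  have hp : GG e T I I I Jb I Jc = GG e T I I I I Jb Jc :=
    qkt_perm12 e T halt1 Jb I Jc
  have hz : GG e T I I I I Jb Jc = 0 := by linarith
  have hg : (∑ i, ∑ j, ∑ k, T (e i) (e j) (e k) * T (Jc (e i)) (Jb (e j)) (e k))
      = GG e T I I I Jc Jb I := by
    simp [GG, hI]
  rw [hg, qkt_perm13 e T halt1 halt2 Jc Jb I, hz]

end QktAux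

/-- On a real inner product space of dimension `4n` with a quaternionic
Hermitian structure `(J1, J2, J3)`, for any 3-form `T` of type (1,2)+(2,1) with respect to
each `Jα`, any orthonormal basis `(e i)`, and any cyclic permutation `(Ja, Jb, Jc)` of
`(J1, J2, J3)`, one has `∑ T(eᵢ,eⱼ,eₖ) · T(Jc eᵢ, Jb eⱼ, eₖ) = 0`. -/
theorem qkt_lemma_mixed_trace_zero
    {V : Type*} [NormedAddCommGroup V] [InnerProductSpace ℝ V] [FiniteDimensional ℝ V]
    (n : ℕ) (hdim : Module.finrank ℝ V = 4 * n)
    (J1 J2 J3 : V →ₗ[ℝ] V)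
    (horth : ∀ J ∈ ({J1, J2, J3} : Set (V →ₗ[ℝ] V)), ∀ x y : V, ⟪J x, J y⟫ = ⟪x, y⟫)
    (hsq : ∀ J ∈ ({J1, J2, J3} : Set (V →ₗ[ℝ] V)), ∀ x : V, J (J x) = -x)
    (h12 : ∀ x : V, J1 (J2 x) = J3 x)
    (h21 : ∀ x : V, J2 (J1 x) = -J3 x)
    (T : V →ₗ[ℝ] V →ₗ[ℝ] V →ₗ[ℝ] ℝ)
    (halt1 : ∀ x y z : V, T x y z = -T y x z)
    (halt2 : ∀ x y z : V, T x y z = -T x z y)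
    (htype : ∀ J ∈ ({J1, J2, J3} : Set (V →ₗ[ℝ] V)), ∀ x y z : V,
      T x y z = T (J x) (J y) z + T (J x) y (J z) + T x (J y) (J z))
    (e : OrthonormalBasis (Fin (4 * n)) ℝ V) :
    ∀ Ja Jb Jc : V →ₗ[ℝ] V,
      ((Ja, Jb, Jc) = (J1, J2, J3) ∨ (Ja, Jb, Jc) = (J2, J3, J1) ∨
        (Ja, Jb, Jc) = (J3, J1, J2)) →
      ∑ i, ∑ j, ∑ k, T (e i) (e j) (e k) * T (Jc (e i)) (Jb (e j)) (e k) = 0 := by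
  have m1 : J1 ∈ ({J1, J2, J3} : Set (V →ₗ[ℝ] V)) := by simp
  have m2 : J2 ∈ ({J1, J2, J3} : Set (V →ₗ[ℝ] V)) := by simp
  have m3 : J3 ∈ ({J1, J2, J3} : Set (V →ₗ[ℝ] V)) := by simp
  intro Ja Jb Jc h
  rcases h with h | h | h
  · injection h with h1 h23; injection h23 with h2 h3
    rw [h2, h3]
    exact qkt_key e J1 J2 J3 (horth J2 m2) (hsq J2 m2) h21 h12 T halt1 halt2 (htype J2 m2)
  · injection h with h1 h23; injection h23 with h2 h3
    rw [h2, h3]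
    have hba : ∀ x : V, J3 (J2 x) = -(J1 x) := by
      intro x
      rw [← h12 (J2 x), hsq J2 m2 x, map_neg]
    have hab : ∀ x : V, J2 (J3 x) = J1 x := by
      intro x
      rw [← h12 x, h21 (J2 x), hba x, neg_neg]
    exact qkt_key e J2 J3 J1 (horth J3 m3) (hsq J3 m3) hba hab T halt1 halt2 (htype J3 m3)
  · injection h with h1 h23; injection h23 with h2 h3
    rw [h2, h3]
    have hba : ∀ x : V, J1 (J3 x) = -(J2 x) := by
      intro x
      rw [← h12 x, hsq J1 m1 (J2 x)]
    have hab : ∀ x : V, J3 (J1 x) = J2 x := by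
      intro x
      rw [← h12 (J1 x), h21 x, map_neg, hba x, neg_neg]
    exact qkt_key e J3 J1 J2 (horth J1 m1) (hsq J1 m1) hba hab T halt1 halt2 (htype J1 m1)
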